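/- arXiv:1706.05822 — 2 statements merged into one kernel-verified Lean document; each statement's English description precedes it below -/
import Mathlib

section
/- Let R be a (not necessarily commutative) ring, let p ∈ R be an idempotent (p² = p), and let q ∈ R. If (p - q)^N = 0 for some positive integer N, then p lies in the two-sided ideal of R generated by q; more precisely, p is a finite sum of products each of which contains q as a factor. -/
section aux

variable {R : Type*} [Ring R] (q : R)

private def InQ (r : R) : Prop := ∃ (m : ℕ) (a b : Fin m → R), r = ∑ i, a i * q * b i

private lemma inQ_zero : InQ q (0 : R) := ⟨0, ![], ![], by simp⟩

private lemma inQ_q : InQ q q := ⟨1, ![1], ![1], by simp⟩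

private lemma inQ_add {x y : R} (hx : InQ q x) (hy : InQ q y) : InQ q (x + y) := by
  obtain ⟨m, a, b, rfl⟩ := hx
  obtain ⟨m', a', b', rfl⟩ := hy
  exact ⟨m + m', Fin.append a a', Fin.append b b', by
    rw [Fin.sum_univ_add]
    simp [Fin.append_left, Fin.append_right]⟩

private lemma inQ_mul_left {x : R} (r : R) (hx : InQ q x) : InQ q (r * x) := by
  obtain ⟨m, a, b, rfl⟩ := hx
  exact ⟨m, fun i => r * a i, b, by rw [Finset.mul_sum]; simp [mul_assoc]⟩

private lemma inQ_mul_right {x : R} (r : R) (hx : InQ q x) : InQ q (x * r) := by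
  obtain ⟨m, a, b, rfl⟩ := hx
  exact ⟨m, a, fun i => b i * r, by rw [Finset.sum_mul]; simp [mul_assoc]⟩

private lemma inQ_diff (p : R) : ∀ n : ℕ, InQ q (p ^ n - (p - q) ^ n)
  | 0 => by simpa using inQ_zero q
  | n + 1 => by
    have key : p ^ (n + 1) - (p - q) ^ (n + 1)
        = p ^ n * q + (p ^ n - (p - q) ^ n) * (p - q) := by
      rw [pow_succ, pow_succ]; noncomm_ring
    rw [key]
    exact inQ_add q (inQ_mul_left q _ (inQ_q q)) (inQ_mul_right q _ (inQ_diff p n))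

end aux

/-- If `p` is idempotent and `(p - q)^N = 0` for some `N > 0`, then `p` is a finite
sum of products `aᵢ * q * bᵢ`, i.e. `p` lies in the two-sided ideal generated by `q`. -/
theorem stmt_0 {R : Type*} [Ring R] (p q : R) (hp : p * p = p)
    (N : ℕ) (hN : 0 < N) (h : (p - q) ^ N = 0) :
    ∃ (m : ℕ) (a b : Fin m → R), p = ∑ i, a i * q * b i := by
  have hpow : p ^ N = p := by
    obtain ⟨k, rfl⟩ := Nat.exists_eq_succ_of_ne_zero hN.ne'
    clear hN h
    induction k with
    | zero => simp
    | succ k ih => rw [pow_succ, ih, hp]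
  have := inQ_diff q p N
  rwa [h, sub_zero, hpow] at this
end

section
/- Let R be a ring, let π, π̂ ∈ R, and suppose π is idempotent and (π − π̂)^N = 0 for some N ≥ 1. Let M be a left R-module and W ⊆ M a submodule with π̂ · (r · w) = 0 for all r ∈ R and w ∈ W. Then π · w = 0 for all w ∈ W. -/
/-- If `π` is idempotent, `(π - π̂)^N = 0`, and `π̂` kills `r • w` for every `r : R`
and `w` in a submodule `W`, then `π` kills `W`. -/
theorem stmt_15 {R : Type*} [Ring R] {M : Type*} [AddCommGroup M] [Module R M]
    (π πh : R) (hπ : π * π = π) (N : ℕ) (hN : 1 ≤ N) (hnilp : (π - πh) ^ N = 0)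
    (W : Submodule R M) (h : ∀ (r : R), ∀ w ∈ W, πh • (r • w) = 0) :
    ∀ w ∈ W, π • w = 0 := by
  intro w hw
  set a := π - πh with ha
  clear_value a
  have hab : a + πh = π := by rw [ha]; abel
  -- key: multiplying by π^n on the right acts like a^n modulo terms killed on W
  have key : ∀ n : ℕ, ∀ x : R, (x * π ^ n) • w = (x * a ^ n) • w := by
    intro n
    induction n with
    | zero => intro x; simp
    | succ n ih =>
      intro x
      have h1 : x * π ^ (n + 1) = (x * π) * π ^ n := by rw [pow_succ', mul_assoc]
      have h2 : (x * π) * a ^ n = x * a ^ (n + 1) + (x * πh) * a ^ n := by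
        rw [pow_succ', ← hab]; noncomm_ring
      have h3 : ((x * πh) * a ^ n) • w = 0 := by
        rw [mul_smul, mul_smul, h (a ^ n) w hw, smul_zero]
      calc (x * π ^ (n + 1)) • w = ((x * π) * π ^ n) • w := by rw [h1]
        _ = ((x * π) * a ^ n) • w := ih (x * π)
        _ = (x * a ^ (n + 1)) • w + ((x * πh) * a ^ n) • w := by rw [h2, add_smul]
        _ = (x * a ^ (n + 1)) • w := by rw [h3, add_zero]
  have hpN : ∀ n, 1 ≤ n → π ^ n = π := by
    intro n
    induction n with
    | zero => omega
    | succ m ih =>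
      intro _
      rcases Nat.eq_zero_or_pos m with h0 | hpos
      · simp [h0]
      · rw [pow_succ, ih hpos, hπ]
  have := key N 1
  rw [one_mul, one_mul, hpN N hN, hnilp, zero_smul] at this
  exact this
end
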